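/- (Correctness of the incremental fusion step) Let 𝓟' = (P_i)_{i∈I}, 𝓕 = (F_j)_{j∈J} and 𝓖 = (G_l)_{l∈L} be finite indexed families of machines over T, let Q be a machine over T, and let f be a natural number. Let R_𝓕 denote the common refinement of 𝓕 (the equivalence relation relating x and y iff x ≈_{F_j} y for every j ∈ J), which is again a machine over T. Assume: (a) every pair of distinct states of T is separated by some member of the family 𝓟' ⊕ (Q); (b) for every j ∈ J, if x and y are related by every member of 𝓟' then x ≈_{F_j} y (each F_j is less than or equal to the RCP of 𝓟'); (c) every pair of distinct states of T separated by some member of 𝓟' is separated by more than f members of the combined family 𝓟' ⊕ 𝓕; (d) every pair of distinct states of T separated by Q or by R_𝓕 is separated by more than f members of the combined family (Q, R_𝓕) ⊕ 𝓖. Then every pair of distinct states of T is separated by more than f members of the combined family 𝓟' ⊕ (Q) ⊕ 𝓖, i.e., d_min(𝓟' ⊕ (Q) ⊕ 𝓖) > f. -/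

import Mathlib

open scoped Classical

/-- A machine over `T` (a closed partition of `T`): an equivalence relation on `T`
that is preserved by the transition function `δ`. -/
structure Machine (T : Type*) (E : Type*) (δ : T → E → T) where
  rel : T → T → Prop
  equiv : Equivalence rel
  closed : ∀ x y : T, rel x y → ∀ e : E, rel (δ x e) (δ y e)

/-- The distance `d_𝓜(t,t')`: the number of machines in the family `M` that
separate `t` and `t'`. -/
noncomputable def fdist {T E ι : Type*} {δ : T → E → T} [Fintype ι]
    (M : ι → Machine T E δ) (t t' : T) : ℕ :=
  (Finset.univ.filter fun i => ¬ (M i).rel t t').card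

/-- The minimum distance `d_min(𝓜)`: the minimum of `fdist M t t'` over all pairs
of distinct states `t ≠ t'`. -/
noncomputable def dmin {T E ι : Type*} {δ : T → E → T} [Fintype ι]
    (M : ι → Machine T E δ) : ℕ :=
  sInf {d : ℕ | ∃ t t' : T, t ≠ t' ∧ d = fdist M t t'}

/-- The common refinement of a family of machines: `x` and `y` are related iff every
member of the family relates them. It is again a machine over `T`. -/
def commonRefinement {T E J : Type*} {δ : T → E → T} (F : J → Machine T E δ) :
    Machine T E δ where
  rel x y := ∀ j : J, (F j).rel x y
  equiv := ⟨fun x j => (F j).equiv.refl x,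
            fun h j => (F j).equiv.symm (h j),
            fun h h' j => (F j).equiv.trans (h j) (h' j)⟩
  closed := fun x y h e j => (F j).closed x y (h j) e


lemma fdist_sum {T E α β : Type*} {δ : T → E → T} [Fintype α] [Fintype β]
    (A : α → Machine T E δ) (B : β → Machine T E δ) (t t' : T) :
    fdist (Sum.elim A B) t t' = fdist A t t' + fdist B t t' := by
  classical
  unfold fdist
  simp only [Finset.card_filter, Fintype.sum_sum_type, Sum.elim_inl, Sum.elim_inr]
  convert rfl
  all_goals split_ifs <;> simp_all

lemma fdist_pair {T E : Type*} {δ : T → E → T} (Q R : Machine T E δ) (t t' : T) :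
    fdist ![Q, R] t t' = (if Q.rel t t' then 0 else 1) + (if R.rel t t' then 0 else 1) := by
  classical
  unfold fdist
  rw [Finset.card_filter]
  simp [Fin.sum_univ_two]
  convert rfl
  all_goals split_ifs <;> simp_all

lemma fdist_const {T E : Type*} {δ : T → E → T} (Q : Machine T E δ) (t t' : T) :
    fdist (fun _ : Unit => Q) t t' = (if Q.rel t t' then 0 else 1) := by
  classical
  unfold fdist
  rw [Finset.card_filter]
  simp

/-- Correctness of the incremental fusion step: if (a) the family
`𝓟' ⊕ (Q)` determines the state of `T`, (b) each `F j` is below the RCP of `𝓟'`,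
(c) every pair separated by some member of `𝓟'` is separated by more than `f`
members of `𝓟' ⊕ 𝓕`, and (d) every pair separated by `Q` or by the common
refinement `R_𝓕` is separated by more than `f` members of `(Q, R_𝓕) ⊕ 𝓖`,
then `d_min(𝓟' ⊕ (Q) ⊕ 𝓖) > f`. -/
theorem incFusion_correct {T E I J L : Type*} [Fintype T] [Nontrivial T]
    [Fintype I] [Fintype J] [Fintype L] {δ : T → E → T}
    (P' : I → Machine T E δ) (F : J → Machine T E δ) (G : L → Machine T E δ)
    (Q : Machine T E δ) (f : ℕ)
    (ha : ∀ t t' : T, t ≠ t' →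
      ∃ i : I ⊕ Unit, ¬ (Sum.elim P' (fun _ : Unit => Q) i).rel t t')
    (hb : ∀ j : J, ∀ x y : T, (∀ i : I, (P' i).rel x y) → (F j).rel x y)
    (hc : ∀ t t' : T, t ≠ t' → (∃ i : I, ¬ (P' i).rel t t') →
      fdist (Sum.elim P' F) t t' > f)
    (hd : ∀ t t' : T, t ≠ t' →
      (¬ Q.rel t t' ∨ ¬ (commonRefinement F).rel t t') →
      fdist (Sum.elim ![Q, commonRefinement F] G) t t' > f) :
    dmin (Sum.elim (Sum.elim P' (fun _ : Unit => Q)) G) > f := by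
  classical
  obtain ⟨x, y, hxy⟩ := exists_pair_ne T
  have hne : {d : ℕ | ∃ t t' : T, t ≠ t' ∧ d = fdist (Sum.elim (Sum.elim P' (fun _ : Unit => Q)) G) t t'}.Nonempty :=
    ⟨_, x, y, hxy, rfl⟩
  obtain ⟨t, t', htt, hdm⟩ := Nat.sInf_mem hne
  rw [dmin, hdm, fdist_sum, fdist_sum, fdist_const]
  by_cases hP : ∃ i : I, ¬ (P' i).rel t t'
  · -- some P' separates
    by_cases hF : ∀ j : J, (F j).rel t t'
    · -- no F separates: hc gives count P' > f
      have h1 := hc t t' htt hP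
      rw [fdist_sum] at h1
      have h2 : fdist F t t' = 0 := by
        unfold fdist
        rw [Finset.card_eq_zero, Finset.filter_eq_empty_iff]
        intro j _
        simp [hF j]
      omega
    · push_neg at hF
      have hR : ¬ (commonRefinement F).rel t t' := by
        intro h
        obtain ⟨j, hj⟩ := hF
        exact hj (h j)
      have h1 := hd t t' htt (Or.inr hR)
      rw [fdist_sum, fdist_pair, if_neg hR] at h1
      have h2 : 1 ≤ fdist P' t t' := by
        obtain ⟨i, hi⟩ := hP
        refine Finset.card_pos.mpr ⟨i, ?_⟩
        simp [fdist, hi]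
      by_cases hQ : Q.rel t t' <;> simp only [if_pos, if_neg, hQ] at h1 ⊢ <;> omega
  · -- no P' separates
    push_neg at hP
    have hR : (commonRefinement F).rel t t' := fun j => hb j t t' hP
    have hQ : ¬ Q.rel t t' := by
      obtain ⟨i, hi⟩ := ha t t' htt
      cases i with
      | inl i => exact absurd (hP i) hi
      | inr u => exact hi
    have h1 := hd t t' htt (Or.inl hQ)
    rw [fdist_sum, fdist_pair, if_neg hQ, if_pos hR] at h1
    simp only [if_neg hQ]
    omega
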